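/- There exist constants C > 0 and γ₂ > 0 such that for every continuously differentiable function f : ℝ³ → ℝ and all x, y ∈ ℝ³, |f(y) − f(x)| ≤ C·δ(x,y)·sup{ |∇_ℍ f(x∗z)| : z ∈ ℝ³, ‖z‖ ≤ γ₂·δ(x,y) }, where |∇_ℍ f| = ((Xf)² + (Yf)²)^(1/2). -/

import Mathlib

noncomputable section

open MeasureTheory

/-- The underlying space of the Heisenberg group: `ℝ³`. -/
abbrev H3 : Type := ℝ × ℝ × ℝ

/-- The Heisenberg group law `(p,q,r)∗(p',q',r') = (p+p', q+q', r+r'+2(qp'−pq'))`. -/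
def Hmul (x y : H3) : H3 :=
  (x.1 + y.1, x.2.1 + y.2.1, x.2.2 + y.2.2 + 2 * (x.2.1 * y.1 - x.1 * y.2.1))

/-- The inverse for the Heisenberg group law. -/
def Hinv (x : H3) : H3 := (-x.1, -x.2.1, -x.2.2)

/-- The homogeneous (gauge) norm `‖(p,q,r)‖ = ((p²+q²)²+r²)^(1/4)`. -/
def Hnorm (x : H3) : ℝ := ((x.1 ^ 2 + x.2.1 ^ 2) ^ 2 + x.2.2 ^ 2) ^ ((1 : ℝ) / 4)

/-- The gauge distance `δ(x,y) = ‖x⁻¹∗y‖`. -/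
def Hdist (x y : H3) : ℝ := Hnorm (Hmul (Hinv x) y)

/-- The gauge ball `B(x,r)`. -/
def Hball (x : H3) (r : ℝ) : Set H3 := {y | Hdist x y < r}

/-- The dilation `λ∘(p,q,r) = (λp, λq, λ²r)`. -/
def Hdil (l : ℝ) (x : H3) : H3 := (l * x.1, l * x.2.1, l ^ 2 * x.2.2)

/-- A lattice point of `ℤ³` seen inside `ℝ³`. -/
def latticePt (k : ℤ × ℤ × ℤ) : H3 := ((k.1 : ℝ), (k.2.1 : ℝ), (k.2.2 : ℝ))

/-- The dyadic point `x_{j,k} = 2^{−j}∘k`. -/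
def xjk (j : ℤ) (k : ℤ × ℤ × ℤ) : H3 := Hdil ((2 : ℝ) ^ (-j)) (latticePt k)

/-- The left-invariant vector field `X = ∂/∂p + 2q ∂/∂r` acting on functions. -/
def XD (f : H3 → ℝ) (x : H3) : ℝ := fderiv ℝ f x (1, 0, 2 * x.2.1)

/-- The left-invariant vector field `Y = ∂/∂q − 2p ∂/∂r` acting on functions. -/
def YD (f : H3 → ℝ) (x : H3) : ℝ := fderiv ℝ f x (0, 1, -2 * x.1)

/-- Lipschitz-type estimate: there exist `C, γ₂ > 0` such that for every
`C¹` function `f` and all `x, y`,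
`|f(y) − f(x)| ≤ C·δ(x,y)·sup{ |∇_ℍ f(x∗z)| : ‖z‖ ≤ γ₂·δ(x,y) }`. -/
lemma Hnorm_nonneg (z : H3) : 0 ≤ Hnorm z := Real.rpow_nonneg (by positivity) _

lemma Hnorm_pow4 (z : H3) : Hnorm z ^ 4 = (z.1 ^ 2 + z.2.1 ^ 2) ^ 2 + z.2.2 ^ 2 := by
  have hg : (0:ℝ) ≤ (z.1 ^ 2 + z.2.1 ^ 2) ^ 2 + z.2.2 ^ 2 := by positivity
  rw [Hnorm, ← Real.rpow_natCast (_ ^ ((1:ℝ)/4)) 4, ← Real.rpow_mul hg]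
  norm_num

lemma Hnorm_le (z : H3) (d : ℝ) (hd : 0 ≤ d) (h1 : |z.1| ≤ 3*d) (h2 : |z.2.1| ≤ 3*d)
    (h3 : |z.2.2| ≤ 14*d^2) : Hnorm z ≤ 6*d := by
  have e1 : z.1^2 ≤ (3*d)^2 := sq_le_sq' (by linarith [abs_le.mp h1 |>.1]) (abs_le.mp h1 |>.2)
  have e2 : z.2.1^2 ≤ (3*d)^2 := sq_le_sq' (by linarith [abs_le.mp h2 |>.1]) (abs_le.mp h2 |>.2)
  have e3 : z.2.2^2 ≤ (14*d^2)^2 := sq_le_sq' (by linarith [abs_le.mp h3 |>.1]) (abs_le.mp h3 |>.2)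
  have e12 : (z.1^2 + z.2.1^2)^2 ≤ (18*d^2)^2 := by
    have h0 : (0:ℝ) ≤ z.1^2 + z.2.1^2 := by positivity
    have : z.1^2 + z.2.1^2 ≤ 18*d^2 := by nlinarith
    exact sq_le_sq' (by nlinarith) this
  have hg : (z.1 ^ 2 + z.2.1 ^ 2) ^ 2 + z.2.2 ^ 2 ≤ (6*d)^4 := by nlinarith [sq_nonneg d]
  have h6 : (0:ℝ) ≤ 6*d := by linarith
  calc Hnorm z ≤ ((6*d)^4) ^ ((1:ℝ)/4) := by
        rw [Hnorm]; exact Real.rpow_le_rpow (by positivity) hg (by norm_num)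
    _ = 6*d := by
        rw [← Real.rpow_natCast (6*d) 4, ← Real.rpow_mul h6]; norm_num

lemma seg_aux (f : H3 → ℝ) (hf : Differentiable ℝ f) (u v : H3) (L M : ℝ)
    (hM : ∀ t ∈ Set.uIcc (0:ℝ) L, |(fderiv ℝ f (u + t • v)) v| ≤ M) :
    |f (u + L • v) - f u| ≤ M * |L| := by
  have hder : ∀ t : ℝ, HasDerivAt (fun s : ℝ => f (u + s • v)) ((fderiv ℝ f (u + t • v)) v) t := by
    intro t
    have h1 : HasDerivAt (fun s : ℝ => u + s • v) v t := by
      simpa using ((hasDerivAt_id t).smul_const v).const_add u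
    exact (hf (u + t • v)).hasFDerivAt.comp_hasDerivAt t h1
  have := Convex.norm_image_sub_le_of_norm_hasDerivWithin_le
    (f := fun s : ℝ => f (u + s • v)) (f' := fun t => (fderiv ℝ f (u + t • v)) v)
    (fun t _ => (hder t).hasDerivWithinAt) (fun t ht => by simpa [Real.norm_eq_abs] using hM t ht)
    (convex_uIcc 0 L) Set.left_mem_uIcc Set.right_mem_uIcc
  simpa [Real.norm_eq_abs] using this

lemma abs_le_of_mem_uIcc {t L : ℝ} (ht : t ∈ Set.uIcc (0:ℝ) L) : |t| ≤ |L| := by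
  rcases Set.mem_uIcc.mp ht with ⟨h1, h2⟩ | ⟨h1, h2⟩ <;>
    exact abs_le.mpr ⟨by cases abs_cases L <;> linarith, by cases abs_cases L <;> linarith⟩

lemma absXD_le (f : H3 → ℝ) (u : H3) : |XD f u| ≤ Real.sqrt (XD f u ^ 2 + YD f u ^ 2) := by
  rw [← Real.sqrt_sq_eq_abs]
  exact Real.sqrt_le_sqrt (by nlinarith [sq_nonneg (YD f u)])

lemma absYD_le (f : H3 → ℝ) (u : H3) : |YD f u| ≤ Real.sqrt (XD f u ^ 2 + YD f u ^ 2) := by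
  rw [← Real.sqrt_sq_eq_abs]
  exact Real.sqrt_le_sqrt (by nlinarith [sq_nonneg (XD f u)])

lemma stepX (f : H3 → ℝ) (hf : ContDiff ℝ 1 f) (x : H3) (M d : ℝ) (hd : 0 ≤ d)
    (hM : ∀ z : H3, Hnorm z ≤ 6*d →
      Real.sqrt (XD f (Hmul x z) ^ 2 + YD f (Hmul x z) ^ 2) ≤ M)
    (z : H3) (L : ℝ)
    (hp : |z.1| + |L| ≤ 3*d) (hq : |z.2.1| ≤ 3*d)
    (hr : |z.2.2| + 2* |z.2.1| * |L| ≤ 14*d^2) :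
    |f (Hmul x (Hmul z (L,0,0))) - f (Hmul x z)| ≤ M * |L| := by
  set u := Hmul x z with hu
  have hxz : ∀ τ : ℝ, Hmul x (Hmul z (τ,0,0)) = u + τ • (1, 0, 2*u.2.1) := by
    intro τ
    simp only [hu, Hmul, Prod.mk.injEq, Prod.smul_mk, Prod.mk_add_mk, smul_eq_mul]
    refine ⟨by ring, by ring, by ring⟩
  rw [hxz L]
  apply seg_aux f (hf.differentiable one_ne_zero)
  intro t ht
  have htL : |t| ≤ |L| := abs_le_of_mem_uIcc ht
  have hnz : Hnorm (Hmul z (t,0,0)) ≤ 6*d := by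
    apply Hnorm_le _ d hd
    · show |z.1 + t| ≤ 3*d
      calc |z.1 + t| ≤ |z.1| + |t| := abs_add_le _ _
        _ ≤ 3*d := by linarith
    · show |z.2.1 + 0| ≤ 3*d
      simpa using hq
    · show |z.2.2 + 0 + 2*(z.2.1 * t - z.1 * 0)| ≤ 14*d^2
      have : |z.2.2 + 0 + 2*(z.2.1 * t - z.1 * 0)| ≤ |z.2.2| + 2* |z.2.1| * |t| := by
        calc |z.2.2 + 0 + 2*(z.2.1 * t - z.1 * 0)| = |z.2.2 + 2*(z.2.1*t)| := by ring_nf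
          _ ≤ |z.2.2| + |2*(z.2.1*t)| := abs_add_le _ _
          _ = |z.2.2| + 2* |z.2.1| * |t| := by rw [abs_mul, abs_mul]; norm_num; ring
      have h2 : 2* |z.2.1| * |t| ≤ 2* |z.2.1| * |L| :=
        mul_le_mul_of_nonneg_left htL (by positivity)
      linarith
  have key := hM _ hnz
  have heq : u + t • ((1:ℝ), (0:ℝ), 2*u.2.1) = Hmul x (Hmul z (t,0,0)) := (hxz t).symm
  rw [heq]
  have h21 : (Hmul x (Hmul z (t,0,0))).2.1 = u.2.1 := by
    rw [← heq]; simp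
  calc |(fderiv ℝ f (Hmul x (Hmul z (t,0,0)))) (1, 0, 2*u.2.1)|
      = |XD f (Hmul x (Hmul z (t,0,0)))| := by rw [XD, h21]
    _ ≤ _ := absXD_le f _
    _ ≤ M := key

lemma stepY (f : H3 → ℝ) (hf : ContDiff ℝ 1 f) (x : H3) (M d : ℝ) (hd : 0 ≤ d)
    (hM : ∀ z : H3, Hnorm z ≤ 6*d →
      Real.sqrt (XD f (Hmul x z) ^ 2 + YD f (Hmul x z) ^ 2) ≤ M)
    (z : H3) (L : ℝ)
    (hp : |z.1| ≤ 3*d) (hq : |z.2.1| + |L| ≤ 3*d)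
    (hr : |z.2.2| + 2* |z.1| * |L| ≤ 14*d^2) :
    |f (Hmul x (Hmul z (0,L,0))) - f (Hmul x z)| ≤ M * |L| := by
  set u := Hmul x z with hu
  have hxz : ∀ τ : ℝ, Hmul x (Hmul z (0,τ,0)) = u + τ • (0, 1, -2*u.1) := by
    intro τ
    simp only [hu, Hmul, Prod.mk.injEq, Prod.smul_mk, Prod.mk_add_mk, smul_eq_mul]
    refine ⟨by ring, by ring, by ring⟩
  rw [hxz L]
  apply seg_aux f (hf.differentiable one_ne_zero)
  intro t ht
  have htL : |t| ≤ |L| := abs_le_of_mem_uIcc ht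
  have hnz : Hnorm (Hmul z (0,t,0)) ≤ 6*d := by
    apply Hnorm_le _ d hd
    · show |z.1 + 0| ≤ 3*d
      simpa using hp
    · show |z.2.1 + t| ≤ 3*d
      calc |z.2.1 + t| ≤ |z.2.1| + |t| := abs_add_le _ _
        _ ≤ 3*d := by linarith
    · show |z.2.2 + 0 + 2*(z.2.1 * 0 - z.1 * t)| ≤ 14*d^2
      have : |z.2.2 + 0 + 2*(z.2.1 * 0 - z.1 * t)| ≤ |z.2.2| + 2* |z.1| * |t| := by
        calc |z.2.2 + 0 + 2*(z.2.1 * 0 - z.1 * t)| = |z.2.2 + -(2*(z.1*t))| := by ring_nf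
          _ ≤ |z.2.2| + |-(2*(z.1*t))| := abs_add_le _ _
          _ = |z.2.2| + 2* |z.1| * |t| := by rw [abs_neg, abs_mul, abs_mul]; norm_num; ring
      have h2 : 2* |z.1| * |t| ≤ 2* |z.1| * |L| :=
        mul_le_mul_of_nonneg_left htL (by positivity)
      linarith
  have key := hM _ hnz
  have heq : u + t • ((0:ℝ), (1:ℝ), -2*u.1) = Hmul x (Hmul z (0,t,0)) := (hxz t).symm
  rw [heq]
  have h1 : (Hmul x (Hmul z (0,t,0))).1 = u.1 := by
    rw [← heq]; simp
  calc |(fderiv ℝ f (Hmul x (Hmul z (0,t,0)))) (0, 1, -2*u.1)|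
      = |YD f (Hmul x (Hmul z (0,t,0)))| := by rw [YD, h1]
    _ ≤ _ := absYD_le f _
    _ ≤ M := key

lemma abs_le_of_sq (a d : ℝ) (hd : 0 ≤ d) (h : a^2 ≤ d^2) : |a| ≤ d := by
  rcases abs_cases a with ⟨h1,_⟩|⟨h1,_⟩ <;> nlinarith

lemma mulabs (u v du dv : ℝ) (hu : |u| ≤ du) (hv : |v| ≤ dv) : |u*v| ≤ du*dv := by
  rw [abs_mul]; exact mul_le_mul hu hv (abs_nonneg v) ((abs_nonneg u).trans hu)

lemma sq_le_of_quart (a d : ℝ) (hd : 0 ≤ d) (h : (a^2)^2 ≤ (d^2)^2) : a^2 ≤ d^2 := by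
  have := abs_le_of_sq (a^2) (d^2) (sq_nonneg d) h
  rwa [abs_of_nonneg (sq_nonneg a)] at this

set_option maxHeartbeats 2000000 in
lemma key (f : H3 → ℝ) (hf : ContDiff ℝ 1 f) (x y : H3) (M : ℝ) (hM0 : 0 ≤ M)
    (hM : ∀ z : H3, Hnorm z ≤ 6 * Hdist x y →
      Real.sqrt (XD f (Hmul x z) ^ 2 + YD f (Hmul x z) ^ 2) ≤ M) :
    |f y - f x| ≤ 6 * Hdist x y * M := by
  set d := Hdist x y with hdd
  set w := Hmul (Hinv x) y with hw
  have hd0 : 0 ≤ d := Hnorm_nonneg _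
  set a := w.1 with hadef
  set b := w.2.1 with hbdef
  set c := w.2.2 with hcdef
  have hnw : Hnorm w = d := rfl
  have hd4 : (a^2+b^2)^2 + c^2 = d^4 := by rw [← hnw, Hnorm_pow4]
  have ha2 : a^2 ≤ d^2 := by
    apply sq_le_of_quart a d hd0
    nlinarith [sq_nonneg c, sq_nonneg b, mul_nonneg (sq_nonneg a) (sq_nonneg b)]
  have hb2 : b^2 ≤ d^2 := by
    apply sq_le_of_quart b d hd0
    nlinarith [sq_nonneg c, sq_nonneg a, mul_nonneg (sq_nonneg a) (sq_nonneg b)]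
  have ha : |a| ≤ d := abs_le_of_sq a d hd0 ha2
  have hb : |b| ≤ d := abs_le_of_sq b d hd0 hb2
  have hc : |c| ≤ d^2 := by
    apply abs_le_of_sq c (d^2) (sq_nonneg d)
    nlinarith [sq_nonneg (a^2+b^2)]
  set s := c + 2*(a*b) with hsdef
  have hPab : |a*b| ≤ d^2 := by
    calc |a*b| ≤ d*d := mulabs a b d d ha hb
      _ = d^2 := (pow_two d).symm
  have hs3 : |s| ≤ 3*d^2 := by
    calc |s| ≤ |c| + |2*(a*b)| := abs_add_le _ _
      _ = |c| + 2*|a*b| := by rw [abs_mul, abs_two]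
      _ ≤ 3*d^2 := by linarith
  set α := Real.sqrt |s| / 2 with hαdef
  set β := -s / (2 * Real.sqrt |s|) with hβdef
  have hα0 : 0 ≤ α := by rw [hαdef]; positivity
  have hα2 : 4*α^2 = |s| := by
    rw [hαdef, div_pow, Real.sq_sqrt (abs_nonneg s)]; ring
  have hαd : α ≤ d := by
    apply le_of_abs_le
    apply abs_le_of_sq α d hd0
    linarith [sq_nonneg d, hα2, hs3]
  have hβα : |β| ≤ α := by
    by_cases hs0 : s = 0
    · rw [hβdef, hs0]; simpa using hα0
    · have hpos : 0 < Real.sqrt |s| := Real.sqrt_pos.mpr (abs_pos.mpr hs0)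
      have hms : Real.sqrt |s| * Real.sqrt |s| = |s| := Real.mul_self_sqrt (abs_nonneg s)
      have heq : |β| = α := by
        rw [hβdef, hαdef, abs_div, abs_neg,
          abs_of_pos (by positivity : (0:ℝ) < 2 * Real.sqrt |s|)]
        field_simp
        linarith [hms]
      linarith [heq.le]
  have hβd : |β| ≤ d := hβα.trans hαd
  have hαβ : 4*(α*β) = -s := by
    by_cases hs0 : s = 0
    · rw [hαdef, hβdef, hs0]; simp
    · have hpos : 0 < Real.sqrt |s| := Real.sqrt_pos.mpr (abs_pos.mpr hs0)
      have hms : Real.sqrt |s| * Real.sqrt |s| = |s| := Real.mul_self_sqrt (abs_nonneg s)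
      rw [hαdef, hβdef]
      field_simp
      ring
  have hPbα : |b*α| ≤ d^2 := by
    calc |b*α| ≤ d*d := mulabs b α d d hb (by rwa [abs_of_nonneg hα0])
      _ = d^2 := (pow_two d).symm
  have hPaβ : |a*β| ≤ d^2 := by
    calc |a*β| ≤ d*d := mulabs a β d d ha hβd
      _ = d^2 := (pow_two d).symm
  have hPαβ : |α*β| ≤ d^2 := by
    calc |α*β| ≤ d*d := mulabs α β d d (by rwa [abs_of_nonneg hα0]) hβd
      _ = d^2 := (pow_two d).symm
  obtain ⟨ab1, ab2⟩ := abs_le.mp hPab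
  obtain ⟨bα1, bα2⟩ := abs_le.mp hPbα
  obtain ⟨aβ1, aβ2⟩ := abs_le.mp hPaβ
  obtain ⟨αβ1, αβ2⟩ := abs_le.mp hPαβ
  obtain ⟨ha1, haa2⟩ := abs_le.mp ha
  obtain ⟨hb1, hbb2⟩ := abs_le.mp hb
  obtain ⟨hβ1, hβ2⟩ := abs_le.mp hβd
  have hαa : |α| = α := abs_of_nonneg hα0
  have hy : Hmul x w = y := by
    rw [hw]; simp only [Hmul, Hinv, Prod.ext_iff]
    refine ⟨by ring, by ring, by ring⟩
  -- step 1 : from (0,0,0) to (a,0,0)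
  have T1 : |f (Hmul x (a,0,0)) - f x| ≤ M * |a| := by
    have h := stepX f hf x M d hd0 hM ((0:ℝ),(0:ℝ),(0:ℝ)) a
      (by simp only [abs_zero]; rw [zero_add]; linarith)
      (by simp only [abs_zero]; linarith)
      (by simp only [abs_zero]; rw [zero_add]; rw [mul_zero, zero_mul]; positivity)
    rw [show Hmul ((0:ℝ),(0:ℝ),(0:ℝ)) (a,0,0) = ((a:ℝ),(0:ℝ),(0:ℝ)) from by
        simp only [Hmul, Prod.ext_iff]; norm_num,
      show Hmul x ((0:ℝ),(0:ℝ),(0:ℝ)) = x from by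
        simp only [Hmul, Prod.ext_iff]; norm_num] at h
    exact h
  -- step 2 : to (a, b, -2ab)
  have T2 : |f (Hmul x (a, b, -(2*(a*b)))) - f (Hmul x (a,0,0))| ≤ M * |b| := by
    have h := stepY f hf x M d hd0 hM ((a:ℝ),(0:ℝ),(0:ℝ)) b
      (by show |a| ≤ 3*d; linarith)
      (by show |(0:ℝ)| + |b| ≤ 3*d; simp only [abs_zero]; linarith)
      (by show |(0:ℝ)| + 2 * |a| * |b| ≤ 14*d^2
          simp only [abs_zero, zero_add]
          have h1 : |a| * |b| ≤ d*d := mul_le_mul ha hb (abs_nonneg b) hd0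
          have h2 : d*d = d^2 := (pow_two d).symm
          have h3 : (0:ℝ) ≤ d^2 := sq_nonneg d
          linarith)
    rw [show Hmul ((a:ℝ),(0:ℝ),(0:ℝ)) (0,b,0) = ((a:ℝ), b, -(2*(a*b))) from by
        simp only [Hmul, Prod.ext_iff]; refine ⟨by ring, by ring, by ring⟩] at h
    exact h
  -- step 3 : to (a+α, b, -2ab+2bα)
  have T3 : |f (Hmul x (a+α, b, -(2*(a*b)) + 2*(b*α))) - f (Hmul x (a, b, -(2*(a*b))))|
      ≤ M * α := by
    have h := stepX f hf x M d hd0 hM ((a:ℝ), b, -(2*(a*b))) α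
      (by show |a| + |α| ≤ 3*d; rw [hαa]; linarith)
      (by show |b| ≤ 3*d; linarith)
      (by show |(-(2*(a*b)))| + 2 * |b| * |α| ≤ 14*d^2
          rw [abs_neg, hαa]
          have h1 : |2*(a*b)| = 2*|a*b| := by rw [abs_mul, abs_two]
          have h2 : |b| * α ≤ d*d := mul_le_mul hb hαd hα0 hd0
          have h3 : d*d = d^2 := (pow_two d).symm
          have h4 : (0:ℝ) ≤ d^2 := sq_nonneg d
          linarith [hPab])
    rw [show Hmul ((a:ℝ), b, -(2*(a*b))) (α,0,0) = ((a+α:ℝ), b, -(2*(a*b)) + 2*(b*α)) from by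
        simp only [Hmul, Prod.ext_iff]; refine ⟨trivial, by ring, by ring⟩] at h
    rwa [hαa] at h
  -- step 4 : to (a+α, b+β, r4)
  have T4 : |f (Hmul x (a+α, b+β, -(2*(a*b)) + 2*(b*α) - 2*(a*β) - 2*(α*β)))
      - f (Hmul x (a+α, b, -(2*(a*b)) + 2*(b*α)))| ≤ M * |β| := by
    have h := stepY f hf x M d hd0 hM ((a+α:ℝ), b, -(2*(a*b)) + 2*(b*α)) β
      (by show |a+α| ≤ 3*d
          calc |a+α| ≤ |a| + |α| := abs_add_le _ _
            _ ≤ 3*d := by rw [hαa]; linarith)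
      (by show |b| + |β| ≤ 3*d; linarith)
      (by show |(-(2*(a*b)) + 2*(b*α))| + 2 * |a+α| * |β| ≤ 14*d^2
          have h1 : |(-(2*(a*b)) + 2*(b*α))| ≤ 4*d^2 := by
            apply abs_le.mpr; constructor <;> linarith
          have h2 : |a+α| ≤ 2*d := by
            calc |a+α| ≤ |a| + |α| := abs_add_le _ _
              _ ≤ 2*d := by rw [hαa]; linarith
          have h3 : |a+α| * |β| ≤ (2*d)*d :=
            mul_le_mul h2 hβd (abs_nonneg β) (by linarith)
          have h4 : (2*d)*d = 2*d^2 := by ring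
          have h5 : (0:ℝ) ≤ d^2 := sq_nonneg d
          linarith)
    rw [show Hmul ((a+α:ℝ), b, -(2*(a*b)) + 2*(b*α)) (0,β,0)
        = ((a+α:ℝ), b+β, -(2*(a*b)) + 2*(b*α) - 2*(a*β) - 2*(α*β)) from by
        simp only [Hmul, Prod.ext_iff]; refine ⟨by ring, trivial, by ring⟩] at h
    exact h
  -- step 5 : to (a, b+β, r5)
  have T5 : |f (Hmul x (a, b+β, -(2*(a*b)) - 2*(a*β) - 4*(α*β)))
      - f (Hmul x (a+α, b+β, -(2*(a*b)) + 2*(b*α) - 2*(a*β) - 2*(α*β)))| ≤ M * α := by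
    have h := stepX f hf x M d hd0 hM
      ((a+α:ℝ), b+β, -(2*(a*b)) + 2*(b*α) - 2*(a*β) - 2*(α*β)) (-α)
      (by show |a+α| + |(-α)| ≤ 3*d
          rw [abs_neg, hαa]
          calc |a+α| + α ≤ (|a| + |α|) + α := by linarith [abs_add_le a α]
            _ ≤ 3*d := by rw [hαa]; linarith)
      (by show |b+β| ≤ 3*d
          calc |b+β| ≤ |b| + |β| := abs_add_le _ _
            _ ≤ 3*d := by linarith)
      (by show |(-(2*(a*b)) + 2*(b*α) - 2*(a*β) - 2*(α*β))| + 2 * |b+β| * |(-α)| ≤ 14*d^2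
          rw [abs_neg, hαa]
          have h1 : |(-(2*(a*b)) + 2*(b*α) - 2*(a*β) - 2*(α*β))| ≤ 8*d^2 := by
            apply abs_le.mpr; constructor <;> linarith
          have h2 : |b+β| ≤ 2*d := by
            calc |b+β| ≤ |b| + |β| := abs_add_le _ _
              _ ≤ 2*d := by linarith
          have h3 : |b+β| * α ≤ (2*d)*d :=
            mul_le_mul h2 hαd hα0 (by linarith)
          have h4 : (2*d)*d = 2*d^2 := by ring
          have h5 : (0:ℝ) ≤ d^2 := sq_nonneg d
          linarith)
    rw [show Hmul ((a+α:ℝ), b+β, -(2*(a*b)) + 2*(b*α) - 2*(a*β) - 2*(α*β)) (-α,0,0)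
        = ((a:ℝ), b+β, -(2*(a*b)) - 2*(a*β) - 4*(α*β)) from by
        simp only [Hmul, Prod.ext_iff]; refine ⟨by ring, by ring, by ring⟩] at h
    rwa [abs_neg, hαa] at h
  -- step 6 : to w = (a,b,c)
  have T6 : |f y - f (Hmul x (a, b+β, -(2*(a*b)) - 2*(a*β) - 4*(α*β)))| ≤ M * |β| := by
    have h := stepY f hf x M d hd0 hM ((a:ℝ), b+β, -(2*(a*b)) - 2*(a*β) - 4*(α*β)) (-β)
      (by show |a| ≤ 3*d; linarith)
      (by show |b+β| + |(-β)| ≤ 3*d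
          rw [abs_neg]
          calc |b+β| + |β| ≤ (|b| + |β|) + |β| := by linarith [abs_add_le b β]
            _ ≤ 3*d := by linarith)
      (by show |(-(2*(a*b)) - 2*(a*β) - 4*(α*β))| + 2 * |a| * |(-β)| ≤ 14*d^2
          rw [abs_neg]
          have h1 : |(-(2*(a*b)) - 2*(a*β) - 4*(α*β))| ≤ 8*d^2 := by
            apply abs_le.mpr; constructor <;> linarith
          have h3 : |a| * |β| ≤ d*d := mul_le_mul ha hβd (abs_nonneg β) hd0
          have h4 : d*d = d^2 := (pow_two d).symm
          have h5 : (0:ℝ) ≤ d^2 := sq_nonneg d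
          linarith)
    rw [show Hmul ((a:ℝ), b+β, -(2*(a*b)) - 2*(a*β) - 4*(α*β)) (0,-β,0) = w from by
        simp only [Hmul, Prod.ext_iff]
        refine ⟨by ring, by ring, ?_⟩
        rw [← hcdef]
        linarith [hαβ, hsdef],
      hy] at h
    rwa [abs_neg] at h
  -- chain the six estimates
  have chain : |f y - f x| ≤ M*|a| + M*|b| + M*α + M*|β| + M*α + M*|β| := by
    have t1 := abs_sub_le (f y) (f (Hmul x (a, b+β, -(2*(a*b)) - 2*(a*β) - 4*(α*β)))) (f x)
    have t2 := abs_sub_le (f (Hmul x (a, b+β, -(2*(a*b)) - 2*(a*β) - 4*(α*β))))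
      (f (Hmul x (a+α, b+β, -(2*(a*b)) + 2*(b*α) - 2*(a*β) - 2*(α*β)))) (f x)
    have t3 := abs_sub_le (f (Hmul x (a+α, b+β, -(2*(a*b)) + 2*(b*α) - 2*(a*β) - 2*(α*β))))
      (f (Hmul x (a+α, b, -(2*(a*b)) + 2*(b*α)))) (f x)
    have t4 := abs_sub_le (f (Hmul x (a+α, b, -(2*(a*b)) + 2*(b*α))))
      (f (Hmul x (a, b, -(2*(a*b))))) (f x)
    have t5 := abs_sub_le (f (Hmul x (a, b, -(2*(a*b))))) (f (Hmul x (a,0,0))) (f x)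
    linarith [T1, T2, T3, T4, T5, T6]
  have hsum : |a| + |b| + α + |β| + α + |β| ≤ 6*d := by linarith
  calc |f y - f x| ≤ M*|a| + M*|b| + M*α + M*|β| + M*α + M*|β| := chain
    _ = M * (|a| + |b| + α + |β| + α + |β|) := by ring
    _ ≤ M * (6*d) := mul_le_mul_of_nonneg_left hsum hM0
    _ = 6 * d * M := by ring

theorem heisenberg_lipschitz_estimate :
    ∃ C : ℝ, 0 < C ∧ ∃ γ₂ : ℝ, 0 < γ₂ ∧
      ∀ f : H3 → ℝ, ContDiff ℝ 1 f → ∀ x y : H3,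
        |f y - f x| ≤ C * Hdist x y *
          sSup {v : ℝ | ∃ z : H3, Hnorm z ≤ γ₂ * Hdist x y ∧
            v = Real.sqrt (XD f (Hmul x z) ^ 2 + YD f (Hmul x z) ^ 2)} := by
  refine ⟨6, by norm_num, 6, by norm_num, ?_⟩
  intro f hf x y
  set d := Hdist x y with hdd
  have hd0 : 0 ≤ d := Hnorm_nonneg _
  set F : H3 → ℝ := fun z => Real.sqrt (XD f (Hmul x z) ^ 2 + YD f (Hmul x z) ^ 2) with hF
  set S : Set ℝ := {v : ℝ | ∃ z : H3, Hnorm z ≤ 6 * d ∧ v = F z} with hS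
  -- continuity of F
  have hFc : Continuous F := by
    have hdf : Continuous (fun u : H3 => fderiv ℝ f u) := hf.continuous_fderiv one_ne_zero
    have hmx : Continuous (fun z : H3 => Hmul x z) := by
      simp only [Hmul]
      fun_prop
    have hXD : Continuous (fun u : H3 => XD f u) := by
      simp only [XD]
      apply hdf.clm_apply
      fun_prop
    have hYD : Continuous (fun u : H3 => YD f u) := by
      simp only [YD]
      apply hdf.clm_apply
      fun_prop
    exact Real.continuous_sqrt.comp
      ((((hXD.comp hmx).pow 2).add ((hYD.comp hmx).pow 2)))
  -- the constraint set is compact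
  have hKc : IsCompact {z : H3 | Hnorm z ≤ 6 * d} := by
    have hKeq : {z : H3 | Hnorm z ≤ 6 * d}
        = {z : H3 | (z.1 ^ 2 + z.2.1 ^ 2) ^ 2 + z.2.2 ^ 2 ≤ (6*d)^4} := by
      ext z
      simp only [Set.mem_setOf_eq]
      constructor
      · intro h
        have h4 : Hnorm z ^ 4 ≤ (6*d)^4 :=
          pow_le_pow_left₀ (Hnorm_nonneg z) h 4
        rwa [Hnorm_pow4] at h4
      · intro h
        have h6 : (0:ℝ) ≤ 6*d := by linarith
        calc Hnorm z ≤ ((6*d)^4) ^ ((1:ℝ)/4) := by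
              rw [Hnorm]; exact Real.rpow_le_rpow (by positivity) h (by norm_num)
          _ = 6*d := by
              rw [← Real.rpow_natCast (6*d) 4, ← Real.rpow_mul h6]; norm_num
    rw [hKeq]
    apply IsCompact.of_isClosed_subset
      (isCompact_Icc (a := ((-(6*d), -(6*d), -((6*d)^2)) : H3)) (b := ((6*d, 6*d, (6*d)^2) : H3)))
    · exact isClosed_le (by fun_prop) continuous_const
    · intro z hz
      simp only [Set.mem_setOf_eq] at hz
      have h1 : |z.1| ≤ 6*d := by
        apply abs_le_of_sq _ _ (by linarith)
        apply sq_le_of_quart _ _ (by linarith)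
        nlinarith [sq_nonneg z.2.2, sq_nonneg z.2.1, sq_nonneg z.1,
          mul_nonneg (sq_nonneg z.1) (sq_nonneg z.2.1)]
      have h2 : |z.2.1| ≤ 6*d := by
        apply abs_le_of_sq _ _ (by linarith)
        apply sq_le_of_quart _ _ (by linarith)
        nlinarith [sq_nonneg z.2.2, sq_nonneg z.2.1, sq_nonneg z.1,
          mul_nonneg (sq_nonneg z.1) (sq_nonneg z.2.1)]
      have h3 : |z.2.2| ≤ (6*d)^2 := by
        apply abs_le_of_sq _ _ (sq_nonneg _)
        have : z.2.2^2 ≤ ((6*d)^2)^2 := by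
          nlinarith [sq_nonneg (z.1^2 + z.2.1^2)]
        linarith [this]
      obtain ⟨h1a, h1b⟩ := abs_le.mp h1
      obtain ⟨h2a, h2b⟩ := abs_le.mp h2
      obtain ⟨h3a, h3b⟩ := abs_le.mp h3
      refine Set.mem_Icc.mpr ⟨⟨h1a, h2a, h3a⟩, ⟨h1b, h2b, h3b⟩⟩
  -- S is the image of the compact set under F
  have hSsub : S ⊆ F '' {z : H3 | Hnorm z ≤ 6 * d} := by
    rintro v ⟨z, hz, rfl⟩
    exact ⟨z, hz, rfl⟩
  have hbdd : BddAbove S := ((hKc.image hFc).bddAbove).mono hSsub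
  have hM : ∀ z : H3, Hnorm z ≤ 6 * d → F z ≤ sSup S :=
    fun z hz => le_csSup hbdd ⟨z, hz, rfl⟩
  have hM0 : 0 ≤ sSup S := by
    have h0 : F ((0:ℝ),(0:ℝ),(0:ℝ)) ∈ S := by
      refine ⟨((0:ℝ),(0:ℝ),(0:ℝ)), ?_, rfl⟩
      have : Hnorm ((0:ℝ),(0:ℝ),(0:ℝ)) = 0 := by
        simp [Hnorm]
      rw [this]; linarith
    exact (Real.sqrt_nonneg _).trans (le_csSup hbdd h0)
  have := key f hf x y (sSup S) hM0 hM
  calc |f y - f x| ≤ 6 * d * sSup S := this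
    _ = 6 * d * sSup S := rfl
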